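/- Let α ≠ 0, γ > 0, θ be real numbers, λ > 0, and set s = (λ − 1/λ)/2. Then det(Y_γ(v), Z_{α,λ,θ}(v)) ≠ 0 for every v ∈ ℝ² with v ≠ (0,0) if and only if D(α,γ,θ,s) < 0, where D(α,γ,θ,s) = 4α²cos²θ sin²θ (γ−1)² s² + 4α cosθ sinθ (1−γ²) s + (γ² − 2γ(1+2α²) + 1). -/

import Mathlib

/-- `det2 v w = v₁w₂ − v₂w₁`. -/
def det2 (v w : ℝ × ℝ) : ℝ := v.1 * w.2 - v.2 * w.1

/-- The real (node) vector field `Y_γ(x,y) = (x, γy)`. -/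
def Ynode (γ : ℝ) (v : ℝ × ℝ) : ℝ × ℝ := (v.1, γ * v.2)

/-- The rotation matrix by angle `θ`. -/
noncomputable def rotM (θ : ℝ) : Matrix (Fin 2) (Fin 2) ℝ :=
  !![Real.cos θ, -Real.sin θ; Real.sin θ, Real.cos θ]

/-- The matrix `M_α = [[1, −α],[α, 1]]` of the logarithmic vector field. -/
def Mlog (α : ℝ) : Matrix (Fin 2) (Fin 2) ℝ := !![1, -α; α, 1]

/-- `B_λ = diag(1,λ)`. -/
def BM (l : ℝ) : Matrix (Fin 2) (Fin 2) ℝ := !![1, 0; 0, l]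

/-- `B_λ⁻¹ = diag(1,1/λ)`. -/
noncomputable def BMinv (l : ℝ) : Matrix (Fin 2) (Fin 2) ℝ := !![1, 0; 0, 1 / l]

/-- The matrix `R_θ B_λ M_α B_λ⁻¹ R_{−θ}` of the pushforward of the
logarithmic vector field `X_α` by `R_θ ∘ B_λ`. -/
noncomputable def Zmat (α l θ : ℝ) : Matrix (Fin 2) (Fin 2) ℝ :=
  rotM θ * BM l * Mlog α * BMinv l * rotM (-θ)

/-- The pushforward of the logarithmic vector field `X_α` by `R_θ ∘ B_λ`,
as a vector field on `ℝ × ℝ`. -/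
noncomputable def Zfun (α l θ : ℝ) (v : ℝ × ℝ) : ℝ × ℝ :=
  ((Zmat α l θ).mulVec ![v.1, v.2] 0, (Zmat α l θ).mulVec ![v.1, v.2] 1)

/-- The discriminant `D(α,γ,θ,s)` of the tangency form. -/
noncomputable def Ddisc (α γ θ s : ℝ) : ℝ :=
  4 * α ^ 2 * Real.cos θ ^ 2 * Real.sin θ ^ 2 * (γ - 1) ^ 2 * s ^ 2 +
  4 * α * Real.cos θ * Real.sin θ * (1 - γ ^ 2) * s +
  (γ ^ 2 - 2 * γ * (1 + 2 * α ^ 2) + 1)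

lemma quad_ne_iff (a b c : ℝ) :
    (∀ x y : ℝ, (x, y) ≠ (0, 0) → a * x ^ 2 + b * x * y + c * y ^ 2 ≠ 0) ↔
      b ^ 2 - 4 * a * c < 0 := by
  constructor
  · intro h
    by_contra hd
    push_neg at hd
    rcases eq_or_ne a 0 with ha | ha
    · exact h 1 0 (by simp) (by simp [ha])
    · set x := (-b + Real.sqrt (b ^ 2 - 4 * a * c)) / (2 * a) with hx
      apply h x 1 (by simp)
      have hs : Real.sqrt (b ^ 2 - 4 * a * c) * Real.sqrt (b ^ 2 - 4 * a * c)
          = b ^ 2 - 4 * a * c := Real.mul_self_sqrt (by linarith)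
      have h0 : a * (x * x) + b * x + c = 0 :=
        (quadratic_eq_zero_iff ha (by rw [discrim]; linear_combination -hs) x).2 (Or.inl rfl)
      linear_combination h0
  · intro hd x y hxy hQ
    have ha : a ≠ 0 := by
      intro h; rw [h] at hd; nlinarith [sq_nonneg b]
    rcases eq_or_ne y 0 with hy | hy
    · subst hy
      have hx : x = 0 := by
        have h2 : a * x ^ 2 = 0 := by linear_combination hQ
        rcases mul_eq_zero.1 h2 with h | h
        · exact absurd h ha
        · exact (pow_eq_zero_iff two_ne_zero).1 h
      exact hxy (by simp [hx])
    · have h1 : (2 * a * x + b * y) ^ 2 = (b ^ 2 - 4 * a * c) * y ^ 2 := by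
        linear_combination 4 * a * hQ
      have h2 : (b ^ 2 - 4 * a * c) * y ^ 2 < 0 :=
        mul_neg_of_neg_of_pos hd (by positivity)
      nlinarith [sq_nonneg (2 * a * x + b * y)]

theorem transverse_iff_D_neg (α γ θ l : ℝ) (hα : α ≠ 0) (hγ : 0 < γ)
    (hl : 0 < l) :
    (∀ v : ℝ × ℝ, v ≠ 0 → det2 (Ynode γ v) (Zfun α l θ v) ≠ 0) ↔
      Ddisc α γ θ ((l - 1 / l) / 2) < 0 := by
  have hl0 : l ≠ 0 := ne_of_gt hl
  set co := Real.cos θ with hco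
  set si := Real.sin θ with hsi
  have hcs : si ^ 2 + co ^ 2 = 1 := Real.sin_sq_add_cos_sq θ
  set A : ℝ := α * (l * co ^ 2 + si ^ 2 / l) with hA
  set B : ℝ := (1 - γ) + co * si * α * (l - 1 / l) * (1 + γ) with hB
  set C : ℝ := γ * α * (co ^ 2 / l + l * si ^ 2) with hC
  have hQ : ∀ v : ℝ × ℝ,
      det2 (Ynode γ v) (Zfun α l θ v) = A * v.1 ^ 2 + B * v.1 * v.2 + C * v.2 ^ 2 := by
    intro v
    simp only [det2, Ynode, Zfun, Zmat, rotM, BM, Mlog, BMinv, Matrix.mul_fin_two,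
      Matrix.mulVec, dotProduct, Fin.sum_univ_two, Real.cos_neg, Real.sin_neg,
      Matrix.cons_val', Matrix.cons_val_zero, Matrix.cons_val_one, Matrix.head_cons,
      Matrix.empty_val', Matrix.cons_val_fin_one, Matrix.head_fin_const, Matrix.of_apply]
    rw [hA, hB, hC, ← hco, ← hsi]
    field_simp
    linear_combination (v.1 * l * v.2 * (1 - γ)) * hcs
  have h4AC : 4 * (A * C) = 4 * γ * α ^ 2 * (1 + co ^ 2 * si ^ 2 * (l - 1 / l) ^ 2) := by
    rw [hA, hC]
    field_simp
    linear_combination (l ^ 2 * (si ^ 2 + co ^ 2 + 1)) * hcs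
  have hDd : Ddisc α γ θ ((l - 1 / l) / 2) = B ^ 2 - 4 * A * C := by
    have hli : l * (1 / l) = 1 := by field_simp
    rw [hB, Ddisc, ← hco, ← hsi]
    linear_combination -h4AC + (8 * α ^ 2 * γ * l * (1 / l) * (si ^ 2 + co ^ 2 + 1)) * hcs +
      8 * α ^ 2 * γ * hli
  rw [hDd, ← quad_ne_iff A B C]
  constructor
  · intro h x y hxy
    have := h (x, y) (by simpa [Prod.ext_iff] using hxy)
    rwa [hQ] at this
  · intro h v hv
    rw [hQ]
    exact h v.1 v.2 (by simpa [Prod.ext_iff] using hv)
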